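/- Let ν ∈ P(ℝ) and Y ∼ ν. Then the set {μ ∈ P(ℝ) : μ ≤_MM ν} coincides with the set of laws of E[Y | f(Y)] over all measurable functions f : ℝ → ℝ. -/

import Mathlib

open MeasureTheory ProbabilityTheory Filter Topology

noncomputable section

/-- Convex order on measures on ℝ. -/
def ConvexOrder (μ ν : Measure ℝ) : Prop :=
  ∀ φ : ℝ → ℝ, ConvexOn ℝ Set.univ φ → Integrable φ μ → Integrable φ ν →
    ∫ x, φ x ∂μ ≤ ∫ x, φ x ∂ν

/-- Extended convex order (nonnegative convex test functions). -/
def ExtConvexOrder (μ ν : Measure ℝ) : Prop :=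
  ∀ φ : ℝ → ℝ, ConvexOn ℝ Set.univ φ → (∀ x, 0 ≤ φ x) → Integrable φ μ → Integrable φ ν →
    ∫ x, φ x ∂μ ≤ ∫ x, φ x ∂ν

/-- π is a coupling of μ and ν. -/
def IsCoupling (π : Measure (ℝ × ℝ)) (μ ν : Measure ℝ) : Prop :=
  π.map Prod.fst = μ ∧ π.map Prod.snd = ν

/-- π is a martingale coupling: a coupling with E[Y|X] = X. -/
def IsMartingaleCoupling (π : Measure (ℝ × ℝ)) (μ ν : Measure ℝ) : Prop :=
  IsCoupling π μ ν ∧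
  ∀ A : Set ℝ, MeasurableSet A →
    ∫ p in (A ×ˢ (Set.univ : Set ℝ)), p.2 ∂π = ∫ p in (A ×ˢ (Set.univ : Set ℝ)), p.1 ∂π

/-- π is a backward Monge transport over the second marginal ν. -/
def IsBackwardMonge (π : Measure (ℝ × ℝ)) (ν : Measure ℝ) : Prop :=
  ∃ h : ℝ → ℝ, Measurable h ∧ π = ν.map (fun y => (h y, y))

/-- f is a backward Monge martingale transport map from ν to f_#ν:
E[Y | f(Y)] = f(Y) where Y ∼ ν. -/
def IsBMMTMap (f : ℝ → ℝ) (ν : Measure ℝ) : Prop :=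
  Measurable f ∧ ∀ A : Set ℝ, MeasurableSet A →
    ∫ y in f ⁻¹' A, y ∂ν = ∫ y in f ⁻¹' A, f y ∂ν

/-- μ ≤_MM ν : existence of a backward Monge martingale transport from μ to ν. -/
def leMM (μ ν : Measure ℝ) : Prop := ∃ f : ℝ → ℝ, IsBMMTMap f ν ∧ ν.map f = μ

/-- θ is the shadow of μ in ν: the ≤_cx-minimal measure θ with μ ≤_cx θ ≤ ν. -/
def IsShadow (ν μ θ : Measure ℝ) : Prop :=
  ConvexOrder μ θ ∧ θ ≤ ν ∧
    ∀ θ' : Measure ℝ, ConvexOrder μ θ' → θ' ≤ ν → ConvexOrder θ θ'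

end

open scoped ENNReal

lemma aux_lint (ν : Measure ℝ) [IsProbabilityMeasure ν] (g : ℝ → ℝ) (hg : Measurable g)
    (C : ℝ) (hC : ∀ n : ℕ, ∫ x in g ⁻¹' Set.Ioc 0 (n : ℝ), g x ∂ν ≤ C) :
    ∫⁻ x, ENNReal.ofReal (g x) ∂ν ≤ ENNReal.ofReal C := by
  set φ : ℕ → ℝ → ℝ≥0∞ := fun n =>
    (g ⁻¹' Set.Ioc 0 (n : ℝ)).indicator (fun x => ENNReal.ofReal (g x)) with hφ
  have hs : ∀ n : ℕ, MeasurableSet (g ⁻¹' Set.Ioc 0 (n : ℝ)) :=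
    fun n => hg measurableSet_Ioc
  have hmeas : ∀ n, Measurable (φ n) := fun n => (hg.ennreal_ofReal).indicator (hs n)
  have hmono : Monotone φ := by
    intro a b hab x
    refine Set.indicator_le_indicator_of_subset ?_ (fun x => zero_le) x
    exact fun x hx => ⟨hx.1, hx.2.trans (by exact_mod_cast hab)⟩
  have hsup : ∀ x, (⨆ n, φ n x) = ENNReal.ofReal (g x) := by
    intro x
    apply le_antisymm
    · exact iSup_le fun n => Set.indicator_le_self _ _ x
    · rcases le_or_gt (g x) 0 with h | h
      · simp [ENNReal.ofReal_eq_zero.2 h]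
      · have hx : x ∈ g ⁻¹' Set.Ioc 0 ((⌈g x⌉₊ : ℝ)) := ⟨h, Nat.le_ceil _⟩
        calc ENNReal.ofReal (g x) = φ ⌈g x⌉₊ x := by simp [hφ, Set.indicator_of_mem hx]
          _ ≤ ⨆ n, φ n x := le_iSup (fun n => φ n x) _
  calc ∫⁻ x, ENNReal.ofReal (g x) ∂ν = ∫⁻ x, ⨆ n, φ n x ∂ν := by simp_rw [hsup]
    _ = ⨆ n, ∫⁻ x, φ n x ∂ν := lintegral_iSup hmeas hmono
    _ ≤ ENNReal.ofReal C := by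
        refine iSup_le fun n => ?_
        have hint : IntegrableOn g (g ⁻¹' Set.Ioc 0 (n : ℝ)) ν := by
          refine ⟨hg.aestronglyMeasurable.restrict, ?_⟩
          refine HasFiniteIntegral.of_bounded (C := (n : ℝ)) ?_
          filter_upwards [ae_restrict_mem (hs n)] with x hx
          rw [Real.norm_eq_abs, abs_of_pos hx.1]
          exact hx.2
        have hpos : 0 ≤ᵐ[ν.restrict (g ⁻¹' Set.Ioc 0 (n : ℝ))] g := by
          filter_upwards [ae_restrict_mem (hs n)] with x hx using hx.1.le
        simp only [hφ]
        rw [lintegral_indicator (hs n) _,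
          ← ofReal_integral_eq_lintegral_ofReal hint hpos]
        exact ENNReal.ofReal_le_ofReal (hC n)

lemma aux_integrable (ν : Measure ℝ) [IsProbabilityMeasure ν]
    (hν : Integrable (fun x => x) ν) (f : ℝ → ℝ) (hf : IsBMMTMap f ν) :
    Integrable f ν := by
  set C := ∫ y, |y| ∂ν with hCdef
  have hνabs : Integrable (fun y => |y|) ν := hν.abs
  have hbound : ∀ s : Set ℝ, MeasurableSet s → |∫ y in s, y ∂ν| ≤ C := by
    intro s hs
    calc |∫ y in s, y ∂ν| ≤ ∫ y in s, |y| ∂ν := by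
          simpa [Real.norm_eq_abs] using
            norm_integral_le_integral_norm (μ := ν.restrict s) (f := fun y => y)
      _ ≤ C := setIntegral_le_integral hνabs (Filter.Eventually.of_forall fun y => abs_nonneg y)
  have hpos : ∫⁻ x, ENNReal.ofReal (f x) ∂ν ≤ ENNReal.ofReal C := by
    refine aux_lint ν f hf.1 C fun n => ?_
    have h1 := hf.2 (Set.Ioc 0 (n : ℝ)) measurableSet_Ioc
    rw [← h1]
    exact (le_abs_self _).trans (hbound _ (hf.1 measurableSet_Ioc))
  have hneg : ∫⁻ x, ENNReal.ofReal (-f x) ∂ν ≤ ENNReal.ofReal C := by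
    have := aux_lint ν (fun x => -f x) hf.1.neg C (fun n => ?_)
    · exact this
    · have hset : (fun x => -f x) ⁻¹' Set.Ioc 0 (n : ℝ) = f ⁻¹' Set.Ico (-(n : ℝ)) 0 := by
        ext x
        simp only [Set.mem_preimage, Set.mem_Ioc, Set.mem_Ico]
        constructor
        · rintro ⟨h1, h2⟩; exact ⟨by linarith, by linarith⟩
        · rintro ⟨h1, h2⟩; exact ⟨by linarith, by linarith⟩
      rw [hset]
      have h1 := hf.2 (Set.Ico (-(n : ℝ)) 0) measurableSet_Ico
      have hIco : MeasurableSet (f ⁻¹' Set.Ico (-(n : ℝ)) 0) := hf.1 measurableSet_Ico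
      have : ∫ x in f ⁻¹' Set.Ico (-(n : ℝ)) 0, -f x ∂ν = -∫ x in f ⁻¹' Set.Ico (-(n : ℝ)) 0, f x ∂ν :=
        integral_neg _
      rw [this, ← h1]
      exact (neg_le_abs _).trans (by simpa using hbound _ hIco)
  refine ⟨hf.1.aestronglyMeasurable, ?_⟩
  have key : ∀ x : ℝ, (‖f x‖₊ : ℝ≥0∞) = ENNReal.ofReal (f x) + ENNReal.ofReal (-f x) := by
    intro x
    rcases le_total 0 (f x) with h | h
    · simp [← enorm_eq_nnnorm, ← ofReal_norm, Real.norm_eq_abs, abs_of_nonneg h,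
        ENNReal.ofReal_eq_zero.2 (neg_nonpos.2 h)]
    · simp [← enorm_eq_nnnorm, ← ofReal_norm, Real.norm_eq_abs, abs_of_nonpos h,
        ENNReal.ofReal_eq_zero.2 h]
  rw [HasFiniteIntegral]
  calc ∫⁻ x, (‖f x‖₊ : ℝ≥0∞) ∂ν
      = ∫⁻ x, (ENNReal.ofReal (f x) + ENNReal.ofReal (-f x)) ∂ν := by simp_rw [key]
    _ = (∫⁻ x, ENNReal.ofReal (f x) ∂ν) + ∫⁻ x, ENNReal.ofReal (-f x) ∂ν :=
        lintegral_add_left hf.1.ennreal_ofReal _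
    _ < ⊤ := ENNReal.add_lt_top.2 ⟨hpos.trans_lt ENNReal.ofReal_lt_top, hneg.trans_lt ENNReal.ofReal_lt_top⟩

open MeasureTheory in
theorem stmt4 (ν : Measure ℝ) [IsProbabilityMeasure ν] (hν : Integrable (fun x => x) ν) :
    {μ : Measure ℝ | leMM μ ν} =
      {μ : Measure ℝ | ∃ f : ℝ → ℝ, Measurable f ∧
        μ = ν.map (ν[(fun y => y) | MeasurableSpace.comap f inferInstance])} := by
  ext μ
  simp only [Set.mem_setOf_eq]
  constructor
  · rintro ⟨f, hf, hmap⟩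
    have hfm : Measurable f := hf.1
    have hm : MeasurableSpace.comap f inferInstance ≤ (inferInstance : MeasurableSpace ℝ) :=
      hfm.comap_le
    haveI : SigmaFinite (ν.trim hm) := inferInstance
    have hint : Integrable f ν := aux_integrable ν hν f hf
    have hae : f =ᵐ[ν] ν[(fun y => y) | MeasurableSpace.comap f inferInstance] := by
      refine ae_eq_condExp_of_forall_setIntegral_eq hm hν ?_ ?_ ?_
      · intro s hs _
        exact hint.integrableOn
      · rintro s ⟨A, hA, rfl⟩ _
        exact (hf.2 A hA).symm
      · refine StronglyMeasurable.aestronglyMeasurable ?_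
        refine Measurable.stronglyMeasurable ?_
        exact Measurable.of_comap_le le_rfl
    exact ⟨f, hfm, by rw [← hmap, Measure.map_congr hae]⟩
  · rintro ⟨f, hfm, hμ⟩
    have hm : MeasurableSpace.comap f inferInstance ≤ (inferInstance : MeasurableSpace ℝ) :=
      hfm.comap_le
    haveI : SigmaFinite (ν.trim hm) := inferInstance
    set g := ν[(fun y => y) | MeasurableSpace.comap f inferInstance] with hg
    have hgm' : StronglyMeasurable[MeasurableSpace.comap f inferInstance] g :=
      stronglyMeasurable_condExp
    have hgm : Measurable g := (hgm'.measurable).mono hm le_rfl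
    refine ⟨g, ⟨hgm, ?_⟩, hμ.symm⟩
    intro A hA
    have hs : MeasurableSet[MeasurableSpace.comap f inferInstance] (g ⁻¹' A) :=
      hgm'.measurable hA
    exact (setIntegral_condExp hm hν hs).symm
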